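/- For every real number x, the absolutely convergent series ∑_{n=1}^∞ cos(nx)/n² satisfies πx(⌊x/(2π)⌋ + ⌈x/(2π)⌉) − 2π²·⌈x/(2π)⌉·⌊x/(2π)⌋ − π²/3 = −2·∑_{n=1}^∞ cos(nx)/n² + x²/2. -/

import Mathlib

open Real
lemma tsum_cos_aux (x : ℝ) :
    ∑' n : ℕ, Real.cos (((n : ℝ) + 1) * x) / ((n : ℝ) + 1) ^ 2
      = π ^ 2 * (Int.fract (x / (2 * π)) ^ 2 - Int.fract (x / (2 * π)) + 1 / 6) := by
  set y := Int.fract (x / (2 * π)) with hy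
  have hmem : y ∈ Set.Icc (0:ℝ) 1 := ⟨Int.fract_nonneg _, (Int.fract_lt_one _).le⟩
  have h := hasSum_one_div_nat_pow_mul_cos (k := 1) one_ne_zero hmem
  have hB : (Polynomial.map (algebraMap ℚ ℝ) (Polynomial.bernoulli (2 * 1))).eval y
      = y ^ 2 - y + 1 / 6 := by
    simp [Polynomial.bernoulli, Finset.sum_range_succ, bernoulli,
      bernoulli'_one, bernoulli'_two]
    ring
  rw [hB] at h
  have hcoef : ((-1 : ℝ) ^ (1 + 1) * (2 * π) ^ (2 * 1) / 2 / ((2 * 1).factorial : ℝ) *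
      (y ^ 2 - y + 1 / 6)) = π ^ 2 * (y ^ 2 - y + 1 / 6) := by
    norm_num [Nat.factorial]
    left; ring
  rw [hcoef] at h
  have hπ : (π : ℝ) ≠ 0 := Real.pi_ne_zero
  have hx : x = 2 * π * ((⌊x / (2 * π)⌋ : ℝ) + y) := by
    have h2 : y = x / (2 * π) - (⌊x / (2 * π)⌋ : ℝ) := rfl
    rw [h2]
    have h3 : 2 * π * (x / (2 * π)) = x := by field_simp
    linear_combination -h3
  have hterm : ∀ n : ℕ, (1 : ℝ) / (n : ℝ) ^ (2 * 1) * Real.cos (2 * π * n * y)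
      = Real.cos ((n : ℝ) * x) / (n : ℝ) ^ 2 := by
    intro n
    have : Real.cos ((n : ℝ) * x) = Real.cos (2 * π * n * y) := by
      conv_lhs => rw [hx]
      rw [show (n : ℝ) * (2 * π * ((⌊x / (2 * π)⌋ : ℝ) + y))
          = 2 * π * n * y + ((n : ℤ) * ⌊x / (2 * π)⌋ : ℤ) * (2 * π) by push_cast; ring]
      exact Real.cos_add_int_mul_two_pi _ _
    rw [this]; ring
  rw [funext hterm] at h
  have hsum := h.summable
  have h0 : Real.cos ((0 : ℕ) * x) / ((0 : ℕ) : ℝ) ^ 2 = 0 := by simp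
  have hshift := Summable.tsum_eq_zero_add hsum
  rw [h0, zero_add, h.tsum_eq] at hshift
  have hrw : ∑' n : ℕ, Real.cos (((n : ℝ) + 1) * x) / ((n : ℝ) + 1) ^ 2
      = ∑' n : ℕ, Real.cos (((n + 1 : ℕ) : ℝ) * x) / ((n + 1 : ℕ) : ℝ) ^ 2 := by
    push_cast; rfl
  rw [hrw, ← hshift]

/-- Closed form of the second symmetric antiderivative `Δ₂` on all of `ℝ`:
for every real `x`,
`π x (⌊x/(2π)⌋ + ⌈x/(2π)⌉) - 2π² ⌈x/(2π)⌉ ⌊x/(2π)⌋ - π²/3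
  = -2 ∑_{n=1}^∞ cos (n x) / n² + x² / 2`. -/
theorem delta_two_closed_form (x : ℝ) :
    π * x * ((⌊x / (2 * π)⌋ : ℝ) + (⌈x / (2 * π)⌉ : ℝ))
        - 2 * π ^ 2 * ((⌈x / (2 * π)⌉ : ℝ) * (⌊x / (2 * π)⌋ : ℝ)) - π ^ 2 / 3
      = -2 * ∑' n : ℕ, Real.cos (((n : ℝ) + 1) * x) / ((n : ℝ) + 1) ^ 2
        + x ^ 2 / 2 := by
  rw [tsum_cos_aux x]
  set r := x / (2 * π) with hr
  have hπ : (π : ℝ) ≠ 0 := Real.pi_ne_zero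
  have hx : x = 2 * π * r := by rw [hr]; field_simp
  have hfr : Int.fract r = r - (⌊r⌋ : ℝ) := rfl
  rcases Int.fract_eq_zero_or_add_one_sub_ceil r with h | h
  · have hrf : r = (⌊r⌋ : ℝ) := by rw [hfr] at h; linarith
    have hc : (⌈r⌉ : ℝ) = (⌊r⌋ : ℝ) := by
      rw [hrf]; norm_cast; simp
    rw [h, hc, hx, hrf]; simp only [Int.floor_intCast]; ring
  · have hc : (⌈r⌉ : ℝ) = (⌊r⌋ : ℝ) + 1 := by
      rw [hfr] at h; linarith
    rw [h, hc, hx]; ring
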